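/- Let F(x_1,…,x_n) be a polynomial in n variables over a field of characteristic zero of total degree at most d_1 + ⋯ + d_n, and let Q_1(x),…,Q_n(x) be monic polynomials of degrees d_1+1,…,d_n+1 respectively, each having distinct roots. Then the sum, over all n-tuples (α_1,…,α_n) with Q_i(α_i) = 0 for each i, of F(α_1,…,α_n) / (Q_1'(α_1)⋯Q_n'(α_n)) is independent of the choice of the Q_i and equals the coefficient of the monomial x_1^{d_1}⋯x_n^{d_n} in F(x_1,…,x_n). -/
import Mathlib

open Polynomial Finset

lemma key_one_var {K : Type*} [Field K] [DecidableEq K] (d k : ℕ) (hk : k ≤ d)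
    (Q : Polynomial K) (hm : Q.Monic) (hdeg : Q.natDegree = d + 1)
    (hc : Q.roots.toFinset.card = d + 1) :
    ∑ α ∈ Q.roots.toFinset, α ^ k / (Polynomial.derivative Q).eval α
      = if k = d then 1 else 0 := by
  set s : Finset K := Q.roots.toFinset with hs
  have hcard_le : Multiset.card Q.roots ≤ d + 1 := hdeg ▸ Q.card_roots'
  have h1 : s.card ≤ Multiset.card Q.roots := Multiset.toFinset_card_le _
  have hrc : Multiset.card Q.roots = d + 1 := le_antisymm hcard_le (hc ▸ h1)
  have hnodup : Q.roots.Nodup :=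
    Multiset.toFinset_card_eq_card_iff_nodup.mp (hc.trans hrc.symm)
  have hinj : Set.InjOn (id : K → K) s := Function.injective_id.injOn
  have hQeq : Q = Lagrange.nodal s id := by
    rw [Lagrange.nodal_eq]
    conv_lhs => rw [← prod_multiset_X_sub_C_of_monic_of_roots_card_eq hm (hrc.trans hdeg.symm)]
    rw [Finset.prod, hs, Multiset.toFinset_val, Multiset.dedup_eq_self.mpr hnodup]
    simp
  have hder : ∀ x ∈ s, (Polynomial.derivative Q).eval x = ∏ y ∈ s.erase x, (x - y) := by
    intro x hx
    rw [hQeq]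
    have h := Lagrange.eval_nodal_derivative_eval_node_eq (s := s) (v := id) (i := x) hx
    simp only [Lagrange.eval_nodal, id_eq] at h
    exact h
  have hX : (X : K[X]) ^ k = Lagrange.interpolate s id (fun x => x ^ k) := by
    have hd : ((X : K[X]) ^ k).degree < s.card := by
      rw [degree_X_pow, hc]
      exact_mod_cast Nat.lt_succ_of_le hk
    have := Lagrange.eq_interpolate (v := id) hinj hd
    simpa using this
  have hcoeff := congrArg (fun p => Polynomial.coeff p d) hX
  simp only [coeff_X_pow, Lagrange.interpolate_apply, Polynomial.finset_sum_coeff,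
    Polynomial.coeff_C_mul] at hcoeff
  have hbasis : ∀ x ∈ s, (Lagrange.basis s id x).coeff d
      = (∏ y ∈ s.erase x, (x - y))⁻¹ := by
    intro x hx
    have hnd : (Lagrange.basis s id x).natDegree = d := by
      rw [Lagrange.natDegree_basis hinj hx, hc]; omega
    rw [← hnd, Polynomial.coeff_natDegree, Lagrange.basis, Polynomial.leadingCoeff_prod,
      ← Finset.prod_inv_distrib]
    refine Finset.prod_congr rfl fun y hy => ?_
    have hxy : (x : K) ≠ y := fun h => (Finset.mem_erase.mp hy).1 h.symm
    rw [Lagrange.basisDivisor, Polynomial.leadingCoeff_mul, Polynomial.leadingCoeff_C,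
      (Polynomial.monic_X_sub_C (id y)).leadingCoeff, mul_one]
    rfl
  rw [if_congr (eq_comm (a := k) (b := d)) rfl rfl, hcoeff]
  refine Finset.sum_congr rfl fun x hx => ?_
  rw [hbasis x hx, hder x hx, div_eq_mul_inv]

theorem sum_eval_div_prod_derivative_eq_coeff {K : Type*} [Field K] [CharZero K] [DecidableEq K]
    (n : ℕ) (d : Fin n → ℕ) (F : MvPolynomial (Fin n) K)
    (hF : F.totalDegree ≤ ∑ i, d i)
    (Q : Fin n → Polynomial K)
    (hQ : ∀ i, (Q i).Monic)
    (hdeg : ∀ i, (Q i).natDegree = d i + 1)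
    (hroots : ∀ i, (Q i).roots.toFinset.card = d i + 1) :
    ∑ α ∈ Fintype.piFinset (fun i => (Q i).roots.toFinset),
        MvPolynomial.eval α F / ∏ i, (Polynomial.derivative (Q i)).eval (α i)
      = MvPolynomial.coeff (Finsupp.equivFunOnFinite.symm d) F := by
  set D : (Fin n) →₀ ℕ := Finsupp.equivFunOnFinite.symm d with hD
  calc
    ∑ α ∈ Fintype.piFinset (fun i => (Q i).roots.toFinset),
        MvPolynomial.eval α F / ∏ i, (Polynomial.derivative (Q i)).eval (α i)
      = ∑ m ∈ F.support, MvPolynomial.coeff m F *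
          ∏ i, ∑ x ∈ (Q i).roots.toFinset,
            x ^ m i / (Polynomial.derivative (Q i)).eval x := by
        have heval : ∀ α : Fin n → K, MvPolynomial.eval α F
            = ∑ m ∈ F.support, MvPolynomial.coeff m F * ∏ i, α i ^ m i :=
          fun α => MvPolynomial.eval_eq' α F
        simp_rw [heval, Finset.sum_div]
        rw [Finset.sum_comm]
        refine Finset.sum_congr rfl fun m _ => ?_
        rw [Finset.prod_univ_sum, Finset.mul_sum]
        refine Finset.sum_congr rfl fun α _ => ?_
        rw [mul_div_assoc, ← Finset.prod_div_distrib]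
    _ = MvPolynomial.coeff D F := by
        have hDi : ∀ i, D i = d i := fun i => rfl
        have hterm : ∀ m ∈ F.support,
            (∏ i, ∑ x ∈ (Q i).roots.toFinset,
              x ^ m i / (Polynomial.derivative (Q i)).eval x) = if m = D then 1 else 0 := by
          intro m hm
          by_cases hmd : m = D
          · subst hmd
            rw [if_pos rfl]
            refine Finset.prod_eq_one fun i _ => ?_
            rw [hDi i, key_one_var (d i) (d i) le_rfl (Q i) (hQ i) (hdeg i) (hroots i),
              if_pos rfl]
          · rw [if_neg hmd]
            obtain ⟨j, hj⟩ : ∃ j, m j < d j := by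
              by_contra hno
              push_neg at hno
              apply hmd
              have hsum1 : (∑ i, m i) ≤ ∑ i, d i := by
                refine le_trans ?_ hF
                rw [show (∑ i, m i) = m.sum fun _ e => e from
                  (Finsupp.sum_fintype m (fun _ e => e) (fun _ => rfl)).symm]
                exact MvPolynomial.le_totalDegree hm
              have hsum2 : (∑ i, d i) ≤ ∑ i, m i :=
                Finset.sum_le_sum fun i _ => hno i
              have heq := (Finset.sum_eq_sum_iff_of_le fun i _ => hno i).mp
                (le_antisymm hsum2 hsum1)
              ext i
              exact ((heq i (Finset.mem_univ i)).symm).trans (hDi i).symm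
            refine Finset.prod_eq_zero (Finset.mem_univ j) ?_
            rw [key_one_var (d j) (m j) hj.le (Q j) (hQ j) (hdeg j) (hroots j),
              if_neg hj.ne]
        have hpick : ∑ m ∈ F.support, MvPolynomial.coeff m F * (if m = D then (1:K) else 0)
            = MvPolynomial.coeff D F := by
          simp only [mul_ite, mul_one, mul_zero, Finset.sum_ite_eq' F.support D]
          split
          · rfl
          · next h => exact (MvPolynomial.notMem_support_iff.mp h).symm
        rw [← hpick]
        exact Finset.sum_congr rfl fun m hm => by rw [hterm m hm]
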